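/- Let u : ℝ → ℝ be twice differentiable with u and u'' bounded on ℝ, and let x ∈ ℝ be a point at which u'' is continuous. Then the limit as α → 2⁻ of c_{1,α} ∫_0^∞ δ²u(x,ξ) ξ^{−(1+α)} dξ equals u''(x). In particular, the fractional Laplacian −c_{1,α} ∫_0^∞ δ²u(x,ξ) ξ^{−(1+α)} dξ converges to −u''(x) as α → 2⁻. -/

import Mathlib

open MeasureTheory Set Filter

lemma aux_nonpos (f f' : ℝ → ℝ) (hf : ∀ t, HasDerivAt f (f' t) t)
    (h0 : f 0 = 0) (b : ℝ) (hb : ∀ t ∈ Icc (0:ℝ) b, f' t ≤ 0) :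
    ∀ t ∈ Icc (0:ℝ) b, f t ≤ 0 := by
  intro t ht
  have hanti : AntitoneOn f (Icc 0 b) :=
    antitoneOn_of_deriv_nonpos (convex_Icc 0 b)
      (fun s _ => (hf s).continuousAt.continuousWithinAt)
      (fun s _ => (hf s).differentiableAt.differentiableWithinAt)
      (fun s hs => by
        rw [(hf s).deriv]
        exact hb s (Ioo_subset_Icc_self (by rwa [interior_Icc] at hs)))
  have h0m : (0:ℝ) ∈ Icc (0:ℝ) b := ⟨le_refl 0, ht.1.trans ht.2⟩
  simpa [h0] using hanti h0m ht ht.1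

lemma quad_bound {u u' u'' : ℝ → ℝ}
    (hd1 : ∀ y, HasDerivAt u (u' y) y) (hd2 : ∀ y, HasDerivAt u' (u'' y) y)
    (x L C δ : ℝ) (hC : ∀ s : ℝ, |s| ≤ δ → |u'' (x + s) - L| ≤ C)
    {ξ : ℝ} (hξ : ξ ∈ Icc (0:ℝ) δ) :
    |u (x + ξ) - 2 * u x + u (x - ξ) - L * ξ ^ 2| ≤ C * ξ ^ 2 := by
  have hG : ∀ t : ℝ, HasDerivAt (fun t => u' (x + t) - u' (x - t))
      (u'' (x + t) + u'' (x - t)) t := by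
    intro t
    have h1 := HasDerivAt.comp_const_add x t (hd2 (x + t))
    have h2 := HasDerivAt.comp_const_sub x t (hd2 (x - t))
    simpa [sub_neg_eq_add] using h1.fun_sub h2
  have hF : ∀ t : ℝ, HasDerivAt (fun t => u (x + t) - 2 * u x + u (x - t))
      (u' (x + t) - u' (x - t)) t := by
    intro t
    have h1 := HasDerivAt.comp_const_add x t (hd1 (x + t))
    have h2 := HasDerivAt.comp_const_sub x t (hd1 (x - t))
    simpa [sub_eq_add_neg] using (h1.sub_const (2 * u x)).fun_add h2
  have habs : ∀ t ∈ Icc (0:ℝ) δ, |t| ≤ δ ∧ |(-t)| ≤ δ := by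
    intro t ht
    constructor
    · rw [abs_of_nonneg ht.1]; exact ht.2
    · rw [abs_neg, abs_of_nonneg ht.1]; exact ht.2
  -- step 1 upper
  have step1u : ∀ t ∈ Icc (0:ℝ) δ, u' (x + t) - u' (x - t) ≤ (2 * L + 2 * C) * t := by
    have := aux_nonpos (fun t => u' (x + t) - u' (x - t) - (2 * L + 2 * C) * t)
      (fun t => u'' (x + t) + u'' (x - t) - (2 * L + 2 * C))
      (fun t => by simpa using (hG t).fun_sub ((hasDerivAt_id t).const_mul (2 * L + 2 * C)))
      (by simp only [add_zero, sub_zero]; ring) δ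
      (fun t ht => by
        obtain ⟨h1, h2⟩ := habs t ht
        have b1 := abs_le.1 (hC t h1)
        have b2 := abs_le.1 (hC (-t) h2)
        rw [show x + -t = x - t by ring] at b2
        linarith [b1.2, b2.2])
    intro t ht
    have h := this t ht
    linarith
  have step1l : ∀ t ∈ Icc (0:ℝ) δ, (2 * L - 2 * C) * t ≤ u' (x + t) - u' (x - t) := by
    have := aux_nonpos (fun t => (2 * L - 2 * C) * t - (u' (x + t) - u' (x - t)))
      (fun t => (2 * L - 2 * C) - (u'' (x + t) + u'' (x - t)))
      (fun t => by simpa using ((hasDerivAt_id t).const_mul (2 * L - 2 * C)).fun_sub (hG t))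
      (by simp only [add_zero, sub_zero]; ring) δ
      (fun t ht => by
        obtain ⟨h1, h2⟩ := habs t ht
        have b1 := abs_le.1 (hC t h1)
        have b2 := abs_le.1 (hC (-t) h2)
        rw [show x + -t = x - t by ring] at b2
        linarith [b1.1, b2.1])
    intro t ht
    have h := this t ht
    linarith
  -- step 2
  have step2u : u (x + ξ) - 2 * u x + u (x - ξ) ≤ (L + C) * ξ ^ 2 := by
    have := aux_nonpos (fun t => u (x + t) - 2 * u x + u (x - t) - (L + C) * t ^ 2)
      (fun t => (u' (x + t) - u' (x - t)) - (L + C) * (2 * t))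
      (fun t => by
        have hp : HasDerivAt (fun t : ℝ => t ^ 2) (2 * t) t := by
          simpa using hasDerivAt_pow 2 t
        exact (hF t).sub (hp.const_mul (L + C)))
      (by simp only [add_zero, sub_zero]; ring) δ
      (fun t ht => by
        have := step1u t ht
        have ht0 := ht.1
        nlinarith)
    have h := this ξ hξ
    linarith
  have step2l : (L - C) * ξ ^ 2 ≤ u (x + ξ) - 2 * u x + u (x - ξ) := by
    have := aux_nonpos (fun t => (L - C) * t ^ 2 - (u (x + t) - 2 * u x + u (x - t)))
      (fun t => (L - C) * (2 * t) - (u' (x + t) - u' (x - t)))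
      (fun t => by
        have hp : HasDerivAt (fun t : ℝ => t ^ 2) (2 * t) t := by
          simpa using hasDerivAt_pow 2 t
        exact (hp.const_mul (L - C)).sub (hF t))
      (by simp only [add_zero, sub_zero]; ring) δ
      (fun t ht => by
        have := step1l t ht
        have ht0 := ht.1
        nlinarith)
    have h := this ξ hξ
    linarith
  rw [abs_le]
  constructor <;> nlinarith

/-- The one-dimensional normalization constant
`c_{1,α} = 2^{α−1} α Γ((1+α)/2) / (√π Γ(1 − α/2))` of the fractional Laplacian. -/
noncomputable def fracLapConst (α : ℝ) : ℝ :=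
  2 ^ (α - 1) * α * Real.Gamma ((1 + α) / 2) / (Real.sqrt Real.pi * Real.Gamma (1 - α / 2))

lemma const_tendsto :
    Tendsto (fun α : ℝ => fracLapConst α / (2 - α)) (nhdsWithin 2 (Iio 2)) (nhds 1) := by
  have hsqrt : Real.sqrt Real.pi ≠ 0 := ne_of_gt (Real.sqrt_pos.2 Real.pi_pos)
  set A : ℝ → ℝ := fun α =>
    2 ^ (α - 2) * α * Real.Gamma ((1 + α) / 2) / (Real.sqrt Real.pi * Real.Gamma (2 - α / 2))
    with hA_def
  have hG32 : Real.Gamma (3 / 2) = Real.sqrt Real.pi / 2 := by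
    have h := Real.Gamma_add_one (s := (1 / 2 : ℝ)) (by norm_num)
    rw [Real.Gamma_one_half_eq] at h
    norm_num at h ⊢
    linarith
  have hA2 : A 2 = 1 := by
    have : ((1:ℝ) + 2) / 2 = 3 / 2 := by norm_num
    simp only [hA_def, this]
    rw [hG32]
    norm_num [Real.Gamma_one]
    field_simp
  have hcontA : ContinuousAt A 2 := by
    have h1 : ContinuousAt (fun α : ℝ => (2:ℝ) ^ (α - 2)) 2 :=
      (Real.continuousAt_const_rpow (two_ne_zero)).comp
        ((continuous_id.sub continuous_const).continuousAt)
    have h2 : ContinuousAt (fun α : ℝ => Real.Gamma ((1 + α) / 2)) 2 := by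
      have hc : ContinuousAt Real.Gamma ((fun α : ℝ => (1 + α) / 2) 2) := by
        show ContinuousAt Real.Gamma ((1 + 2 : ℝ) / 2)
        refine (Real.differentiableAt_Gamma ?_).continuousAt
        intro m
        have hm : (0:ℝ) ≤ m := Nat.cast_nonneg m
        intro h
        linarith
      exact ContinuousAt.comp (g := Real.Gamma) (f := fun α : ℝ => (1 + α) / 2) hc
        (((continuous_const.add continuous_id).div_const 2).continuousAt)
    have h3 : ContinuousAt (fun α : ℝ => Real.Gamma (2 - α / 2)) 2 := by
      have hc : ContinuousAt Real.Gamma ((fun α : ℝ => 2 - α / 2) 2) := by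
        show ContinuousAt Real.Gamma (2 - (2:ℝ) / 2)
        refine (Real.differentiableAt_Gamma ?_).continuousAt
        intro m
        have hm : (0:ℝ) ≤ m := Nat.cast_nonneg m
        intro h
        linarith
      exact ContinuousAt.comp (g := Real.Gamma) (f := fun α : ℝ => 2 - α / 2) hc
        ((continuous_const.sub (continuous_id.div_const 2)).continuousAt)
    have hden : Real.sqrt Real.pi * Real.Gamma (2 - (2:ℝ) / 2) ≠ 0 := by
      norm_num [Real.Gamma_one, hsqrt]
    exact ((h1.mul continuousAt_id).mul h2).div (continuousAt_const.mul h3) hden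
  have hAt : Tendsto A (nhdsWithin 2 (Iio 2)) (nhds 1) := by
    rw [← hA2]
    exact hcontA.continuousWithinAt.tendsto
  refine hAt.congr' ?_
  filter_upwards [self_mem_nhdsWithin] with α (hα : α < 2)
  have hz : 1 - α / 2 ≠ 0 := by intro h; apply absurd hα; linarith [h]
  have hz' : (0:ℝ) < 1 - α / 2 := by linarith
  have hΓ : Real.Gamma (1 - α / 2) ≠ 0 := ne_of_gt (Real.Gamma_pos_of_pos hz')
  have hGam : Real.Gamma (2 - α / 2) = (1 - α / 2) * Real.Gamma (1 - α / 2) := by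
    rw [show (2 - α / 2 : ℝ) = (1 - α / 2) + 1 by ring, Real.Gamma_add_one hz]
  have hpow : (2:ℝ) ^ (α - 1) = 2 ^ (α - 2) * 2 := by
    rw [show (α - 1 : ℝ) = (α - 2) + 1 by ring, Real.rpow_add_one two_ne_zero]
  simp only [hA_def, fracLapConst, hGam, hpow]
  have h2a : (2:ℝ) - α ≠ 0 := by intro h; apply absurd hα; linarith [h]
  field_simp

lemma tendsto_J (u u' u'' : ℝ → ℝ)
    (hd1 : ∀ y, HasDerivAt u (u' y) y) (hd2 : ∀ y, HasDerivAt u' (u'' y) y)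
    (B B₂ : ℝ) (hB : ∀ y, |u y| ≤ B) (hB2 : ∀ y, |u'' y| ≤ B₂)
    (x : ℝ) (hcont : ContinuousAt u'' x) :
    Tendsto (fun α : ℝ => (2 - α) *
        ∫ ξ in Ioi (0:ℝ), (u (x + ξ) - 2 * u x + u (x - ξ)) * ξ ^ (-(1 + α)))
      (nhdsWithin 2 (Iio 2)) (nhds (u'' x)) := by
  set F : ℝ → ℝ := fun ξ => u (x + ξ) - 2 * u x + u (x - ξ) with hFdef
  have hBpos : 0 ≤ B := le_trans (abs_nonneg _) (hB x)
  have hFq : ∀ ξ : ℝ, 0 ≤ ξ → |F ξ| ≤ B₂ * ξ ^ 2 := by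
    intro ξ hξ
    have h := quad_bound hd1 hd2 x 0 B₂ ξ (fun s _ => by simpa using hB2 (x + s))
      ⟨hξ, le_refl ξ⟩
    simpa using h
  have hF4B : ∀ ξ : ℝ, |F ξ| ≤ 4 * B := by
    intro ξ
    have h1 := abs_le.1 (hB (x + ξ))
    have h2 := abs_le.1 (hB x)
    have h3 := abs_le.1 (hB (x - ξ))
    rw [abs_le]
    constructor <;> simp only [hFdef] <;> [nlinarith; nlinarith]
  have hu : Continuous u := continuous_iff_continuousAt.2 fun y => (hd1 y).continuousAt
  have hcontF : Continuous F := by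
    exact ((hu.comp (continuous_const.add continuous_id)).sub continuous_const).add
      (hu.comp (continuous_const.sub continuous_id))
  rw [Metric.tendsto_nhds]
  intro ε' hε'
  have hε : 0 < ε' / 2 := by positivity
  set ε := ε' / 2 with hεdef
  obtain ⟨δ₁, hδ₁pos, hδ₁⟩ := Metric.continuousAt_iff.1 hcont ε hε
  set δ₀ : ℝ := min 1 (δ₁ / 2) with hδ₀def
  have hδ₀pos : 0 < δ₀ := lt_min one_pos (by positivity)
  have hδ₀le1 : δ₀ ≤ 1 := min_le_left _ _
  have hδ₀le : δ₀ ≤ δ₁ / 2 := min_le_right _ _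
  have hloc : ∀ s : ℝ, |s| ≤ δ₀ → |u'' (x + s) - u'' x| ≤ ε := by
    intro s hs
    have hd : dist (x + s) x < δ₁ := by
      rw [Real.dist_eq, show x + s - x = s by ring]
      linarith
    have := hδ₁ hd
    rw [Real.dist_eq] at this
    exact this.le
  set C' : ℝ := 4 * B * δ₀ ^ (-2 : ℝ) with hC'def
  have hC'pos : 0 ≤ C' := by positivity
  have he : Tendsto (fun α : ℝ => |u'' x| * |δ₀ ^ (2 - α) - 1| + ε + (2 - α) * C')
      (nhdsWithin 2 (Iio 2)) (nhds ε) := by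
    have h1 : ContinuousAt (fun α : ℝ => δ₀ ^ (2 - α)) 2 :=
      ContinuousAt.comp (g := fun y : ℝ => δ₀ ^ y) (f := fun α : ℝ => 2 - α)
        (Real.continuousAt_const_rpow (ne_of_gt hδ₀pos))
        ((continuous_const.sub continuous_id).continuousAt)
    have hc : ContinuousAt
        (fun α : ℝ => |u'' x| * |δ₀ ^ (2 - α) - 1| + ε + (2 - α) * C') 2 :=
      ((continuousAt_const.mul ((h1.sub continuousAt_const).abs)).add continuousAt_const).add
        (((continuous_const.sub continuous_id).continuousAt).mul continuousAt_const)
    have hval : |u'' x| * |δ₀ ^ ((2:ℝ) - 2) - 1| + ε + (2 - 2) * C' = ε := by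
      norm_num
    have hT := (hc.continuousWithinAt (s := Iio 2)).tendsto
    rw [hval] at hT
    exact hT
  have hee : ∀ᶠ α in nhdsWithin 2 (Iio 2),
      |u'' x| * |δ₀ ^ (2 - α) - 1| + ε + (2 - α) * C' < ε' :=
    he.eventually_lt_const (by rw [hεdef]; linarith)
  filter_upwards [Ioo_mem_nhdsLT_of_mem (show (2:ℝ) ∈ Ioc 1 2 from ⟨one_lt_two, le_refl 2⟩),
    hee] with α hα hlt
  obtain ⟨hα1, hα2⟩ := hα
  have hαpos : 0 < α := lt_trans one_pos hα1
  have h2a : 0 < 2 - α := by linarith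
  have hr1 : -(1 + α) < -1 := by linarith
  have hmeas : ∀ s : Set ℝ, s ⊆ Ioi 0 → MeasurableSet s →
      AEStronglyMeasurable (fun ξ => F ξ * ξ ^ (-(1 + α))) (volume.restrict s) := by
    intro s hs hsm
    refine ContinuousOn.aestronglyMeasurable ?_ hsm
    intro ξ hξ
    have hξ0 : ξ ≠ 0 := ne_of_gt (hs hξ)
    exact (hcontF.continuousAt.mul
      (Real.continuousAt_rpow_const ξ (-(1 + α)) (Or.inl hξ0))).continuousWithinAt
  have hpowmul : ∀ ξ : ℝ, 0 < ξ → ξ ^ 2 * ξ ^ (-(1 + α)) = ξ ^ (1 - α) := by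
    intro ξ hξ
    rw [← Real.rpow_natCast ξ 2, ← Real.rpow_add hξ]
    congr 1
    push_cast
    ring
  have hint0 : IntegrableOn (fun ξ : ℝ => ξ ^ (1 - α)) (Ioc 0 δ₀) :=
    (intervalIntegrable_iff_integrableOn_Ioc_of_le hδ₀pos.le).1
      (intervalIntegral.intervalIntegrable_rpow' (by linarith))
  have hint1 : IntegrableOn (fun ξ => F ξ * ξ ^ (-(1 + α))) (Ioc 0 δ₀) := by
    refine Integrable.mono' (hint0.const_mul B₂)
      (hmeas _ Ioc_subset_Ioi_self measurableSet_Ioc) ?_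
    rw [ae_restrict_iff' measurableSet_Ioc]
    refine ae_of_all _ (fun ξ hξ => ?_)
    have hξ0 : 0 < ξ := hξ.1
    have hrpos : 0 ≤ ξ ^ (-(1 + α)) := Real.rpow_nonneg hξ0.le _
    rw [Real.norm_eq_abs, abs_mul, abs_of_nonneg hrpos]
    calc |F ξ| * ξ ^ (-(1 + α)) ≤ (B₂ * ξ ^ 2) * ξ ^ (-(1 + α)) :=
          mul_le_mul_of_nonneg_right (hFq ξ hξ0.le) hrpos
      _ = B₂ * ξ ^ (1 - α) := by rw [mul_assoc, hpowmul ξ hξ0]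
  have hint2' : IntegrableOn (fun ξ : ℝ => ξ ^ (-(1 + α))) (Ioi δ₀) :=
    integrableOn_Ioi_rpow_of_lt hr1 hδ₀pos
  have hint2 : IntegrableOn (fun ξ => F ξ * ξ ^ (-(1 + α))) (Ioi δ₀) := by
    refine Integrable.mono' (hint2'.const_mul (4 * B))
      (hmeas _ (Ioi_subset_Ioi hδ₀pos.le) measurableSet_Ioi) ?_
    rw [ae_restrict_iff' measurableSet_Ioi]
    refine ae_of_all _ (fun ξ hξ => ?_)
    have hξ0 : 0 < ξ := lt_trans hδ₀pos hξ
    have hrpos : 0 ≤ ξ ^ (-(1 + α)) := Real.rpow_nonneg hξ0.le _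
    rw [Real.norm_eq_abs, abs_mul, abs_of_nonneg hrpos]
    exact mul_le_mul_of_nonneg_right (hF4B ξ) hrpos
  have hsplit : ∫ ξ in Ioi (0:ℝ), F ξ * ξ ^ (-(1 + α)) =
      (∫ ξ in Ioc (0:ℝ) δ₀, F ξ * ξ ^ (-(1 + α))) + ∫ ξ in Ioi δ₀, F ξ * ξ ^ (-(1 + α)) := by
    rw [← setIntegral_union (Ioc_disjoint_Ioi (le_refl δ₀)) measurableSet_Ioi hint1 hint2,
      Ioc_union_Ioi_eq_Ioi hδ₀pos.le]
  have hval1 : ∫ ξ in Ioc (0:ℝ) δ₀, ξ ^ (1 - α) = δ₀ ^ (2 - α) / (2 - α) := by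
    rw [← intervalIntegral.integral_of_le hδ₀pos.le, integral_rpow (Or.inl (by linarith)),
      Real.zero_rpow (by linarith : (1 - α) + 1 ≠ 0),
      show (1 - α + 1 : ℝ) = 2 - α by ring]
    ring
  have key1 : |(∫ ξ in Ioc (0:ℝ) δ₀, F ξ * ξ ^ (-(1 + α))) - u'' x * (δ₀ ^ (2 - α) / (2 - α))|
      ≤ ε * (δ₀ ^ (2 - α) / (2 - α)) := by
    have hint0' := hint0.const_mul (u'' x)
    rw [← hval1, ← integral_const_mul, ← integral_sub hint1 hint0']
    have hbnd : ∀ ξ ∈ Ioc (0:ℝ) δ₀,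
        ‖F ξ * ξ ^ (-(1 + α)) - u'' x * ξ ^ (1 - α)‖ ≤ ε * ξ ^ (1 - α) := by
      intro ξ hξ
      have hξ0 : 0 < ξ := hξ.1
      have hrpos : 0 ≤ ξ ^ (-(1 + α)) := Real.rpow_nonneg hξ0.le _
      have heq : F ξ * ξ ^ (-(1 + α)) - u'' x * ξ ^ (1 - α)
          = (F ξ - u'' x * ξ ^ 2) * ξ ^ (-(1 + α)) := by
        rw [← hpowmul ξ hξ0]; ring
      rw [Real.norm_eq_abs, heq, abs_mul, abs_of_nonneg hrpos]
      calc |F ξ - u'' x * ξ ^ 2| * ξ ^ (-(1 + α)) ≤ (ε * ξ ^ 2) * ξ ^ (-(1 + α)) :=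
            mul_le_mul_of_nonneg_right
              (quad_bound hd1 hd2 x (u'' x) ε δ₀ hloc ⟨hξ0.le, hξ.2⟩) hrpos
        _ = ε * ξ ^ (1 - α) := by rw [mul_assoc, hpowmul ξ hξ0]
    have h := norm_integral_le_of_norm_le
      (f := fun ξ : ℝ => F ξ * ξ ^ (-(1 + α)) - u'' x * ξ ^ (1 - α))
      (hint0.const_mul ε)
      ((ae_restrict_iff' measurableSet_Ioc).2 (ae_of_all _ hbnd))
    rw [Real.norm_eq_abs, integral_const_mul] at h
    exact h
  have key2 : |∫ ξ in Ioi δ₀, F ξ * ξ ^ (-(1 + α))| ≤ C' := by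
    have h := norm_integral_le_of_norm_le
      (f := fun ξ : ℝ => F ξ * ξ ^ (-(1 + α)))
      (hint2'.const_mul (4 * B))
      ((ae_restrict_iff' measurableSet_Ioi).2 (ae_of_all _ (fun ξ hξ => by
        have hξ0 : 0 < ξ := lt_trans hδ₀pos hξ
        have hrpos : 0 ≤ ξ ^ (-(1 + α)) := Real.rpow_nonneg hξ0.le _
        rw [Real.norm_eq_abs, abs_mul, abs_of_nonneg hrpos]
        exact mul_le_mul_of_nonneg_right (hF4B ξ) hrpos)))
    rw [Real.norm_eq_abs, integral_const_mul, integral_Ioi_rpow_of_lt hr1 hδ₀pos] at h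
    have heq : -δ₀ ^ (-(1 + α) + 1) / (-(1 + α) + 1) = δ₀ ^ (-α) / α := by
      rw [show (-(1 + α) + 1 : ℝ) = -α by ring, neg_div_neg_eq]
    rw [heq] at h
    refine h.trans ?_
    have hd1' : δ₀ ^ (-α) ≤ δ₀ ^ (-2 : ℝ) :=
      Real.rpow_le_rpow_of_exponent_ge hδ₀pos hδ₀le1 (by linarith)
    have hd2' : δ₀ ^ (-α) / α ≤ δ₀ ^ (-α) := by
      rw [div_le_iff₀ hαpos]
      nlinarith [Real.rpow_nonneg hδ₀pos.le (-α)]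
    rw [hC'def]
    nlinarith [Real.rpow_nonneg hδ₀pos.le (-α), Real.rpow_nonneg hδ₀pos.le (-2 : ℝ)]
  rw [Real.dist_eq]
  refine lt_of_le_of_lt ?_ hlt
  rw [hsplit]
  set P := ∫ ξ in Ioc (0:ℝ) δ₀, F ξ * ξ ^ (-(1 + α)) with hP
  set Q := ∫ ξ in Ioi δ₀, F ξ * ξ ^ (-(1 + α)) with hQ
  have hδle1' : δ₀ ^ (2 - α) ≤ 1 := Real.rpow_le_one hδ₀pos.le hδ₀le1 h2a.le
  have expand : (2 - α) * (P + Q) - u'' x =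
      (2 - α) * (P - u'' x * (δ₀ ^ (2 - α) / (2 - α))) + u'' x * (δ₀ ^ (2 - α) - 1)
        + (2 - α) * Q := by
    field_simp
    ring
  rw [expand]
  have t1 : |(2 - α) * (P - u'' x * (δ₀ ^ (2 - α) / (2 - α)))| ≤ ε := by
    rw [abs_mul, abs_of_pos h2a]
    calc (2 - α) * |P - u'' x * (δ₀ ^ (2 - α) / (2 - α))|
        ≤ (2 - α) * (ε * (δ₀ ^ (2 - α) / (2 - α))) :=
          mul_le_mul_of_nonneg_left key1 h2a.le
      _ = ε * δ₀ ^ (2 - α) := by field_simp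
      _ ≤ ε := by nlinarith [Real.rpow_nonneg hδ₀pos.le (2 - α)]
  have t2 : |u'' x * (δ₀ ^ (2 - α) - 1)| = |u'' x| * |δ₀ ^ (2 - α) - 1| := abs_mul _ _
  have t3 : |(2 - α) * Q| ≤ (2 - α) * C' := by
    rw [abs_mul, abs_of_pos h2a]
    exact mul_le_mul_of_nonneg_left key2 h2a.le
  calc |(2 - α) * (P - u'' x * (δ₀ ^ (2 - α) / (2 - α))) + u'' x * (δ₀ ^ (2 - α) - 1)
        + (2 - α) * Q|
      ≤ |(2 - α) * (P - u'' x * (δ₀ ^ (2 - α) / (2 - α))) + u'' x * (δ₀ ^ (2 - α) - 1)|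
        + |(2 - α) * Q| := abs_add_le _ _
    _ ≤ |(2 - α) * (P - u'' x * (δ₀ ^ (2 - α) / (2 - α)))| + |u'' x * (δ₀ ^ (2 - α) - 1)|
        + |(2 - α) * Q| := by linarith [abs_add_le ((2 - α) * (P - u'' x * (δ₀ ^ (2 - α) / (2 - α)))) (u'' x * (δ₀ ^ (2 - α) - 1))]
    _ ≤ |u'' x| * |δ₀ ^ (2 - α) - 1| + ε + (2 - α) * C' := by
        rw [t2] at *
        linarith

/-- If `u : ℝ → ℝ` is twice differentiable with `u` and `u''` bounded, and `u''` is
continuous at `x`, then `c_{1,α} ∫_0^∞ δ²u(x,ξ) ξ^{−(1+α)} dξ → u''(x)` as `α → 2⁻`;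
in particular the fractional Laplacian of `u` at `x` converges to `−u''(x)`. -/
theorem stmt18 (u u' u'' : ℝ → ℝ)
    (hd1 : ∀ y, HasDerivAt u (u' y) y) (hd2 : ∀ y, HasDerivAt u' (u'' y) y)
    (hbd : ∃ B : ℝ, ∀ y, |u y| ≤ B) (hbd2 : ∃ B₂ : ℝ, ∀ y, |u'' y| ≤ B₂)
    (x : ℝ) (hcont : ContinuousAt u'' x) :
    Filter.Tendsto (fun α : ℝ =>
        fracLapConst α *
          ∫ ξ in Set.Ioi (0:ℝ), (u (x + ξ) - 2 * u x + u (x - ξ)) * ξ ^ (-(1 + α)))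
      (nhdsWithin 2 (Set.Iio 2)) (nhds (u'' x)) ∧
    Filter.Tendsto (fun α : ℝ =>
        -(fracLapConst α *
          ∫ ξ in Set.Ioi (0:ℝ), (u (x + ξ) - 2 * u x + u (x - ξ)) * ξ ^ (-(1 + α))))
      (nhdsWithin 2 (Set.Iio 2)) (nhds (-u'' x)) := by
  obtain ⟨B, hB⟩ := hbd
  obtain ⟨B₂, hB2⟩ := hbd2
  have hJ := tendsto_J u u' u'' hd1 hd2 B B₂ hB hB2 x hcont
  have hCt := const_tendsto
  have hmul := hCt.mul hJ
  rw [one_mul] at hmul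
  have heq : ∀ᶠ α in nhdsWithin (2:ℝ) (Iio 2),
      (fracLapConst α / (2 - α)) *
        ((2 - α) * ∫ ξ in Ioi (0:ℝ), (u (x + ξ) - 2 * u x + u (x - ξ)) * ξ ^ (-(1 + α)))
      = fracLapConst α *
        ∫ ξ in Ioi (0:ℝ), (u (x + ξ) - 2 * u x + u (x - ξ)) * ξ ^ (-(1 + α)) := by
    filter_upwards [self_mem_nhdsWithin] with α (hα : α < 2)
    have h2a : (2:ℝ) - α ≠ 0 := by intro h; apply absurd hα; linarith [h]
    field_simp
  have h1 := hmul.congr' heq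
  exact ⟨h1, h1.neg⟩
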